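/- Let n ≥ 5 be an integer, let c_i = (i, i+1, i+2) ∈ A_n for 1 ≤ i ≤ n-2, and define v_i = c_{n-2}·c_{n-3}⋯c_{i+1}·c_i·c_{i+1}^{-1}⋯c_{n-3}^{-1}·c_{n-2}^{-1} for 1 ≤ i ≤ n-2 (so v_{n-2} = c_{n-2}). Then v_i^3 = 1 for all i, (v_i·v_j)^2 = 1 for all i ≠ j, and v_1, …, v_{n-2} generate A_n. -/
import Mathlib


/-- The 3-cycle `(i, i+1, i+2)` in the symmetric group on `{1, …, n}` (identified with
`Fin n` via `j ↦ j - 1`), defined for `1 ≤ i ≤ n - 2` (junk value `1` otherwise). -/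
def threeCycle (n i : ℕ) : Equiv.Perm (Fin n) :=
  if h : 1 ≤ i ∧ i + 1 < n then
    Equiv.swap ⟨i - 1, by omega⟩ ⟨i + 1, h.2⟩ * Equiv.swap ⟨i - 1, by omega⟩ ⟨i, by omega⟩
  else 1

/-- The descending product `x_m · x_{m-1} ⋯ x_k` (equal to `1` when `k = m + 1`). -/
def descProd {G : Type*} [Monoid G] (x : ℕ → G) (m k : ℕ) : G :=
  (((List.range' k (m + 1 - k)).reverse).map x).prod

/-- The element `vᵢ = c_{n-2} ⋯ c_{i+1} · cᵢ · c_{i+1}⁻¹ ⋯ c_{n-2}⁻¹`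
(in particular `v_{n-2} = c_{n-2}`). -/
def vElem (n i : ℕ) : Equiv.Perm (Fin n) :=
  descProd (threeCycle n) (n - 2) (i + 1) * threeCycle n i *
    (descProd (threeCycle n) (n - 2) (i + 1))⁻¹

open Equiv Equiv.Perm

section c3
variable {α : Type*} [DecidableEq α]

/-- cycle a → b → c → a -/
def c3 (a b c : α) : Equiv.Perm α := Equiv.swap a c * Equiv.swap a b

lemma c3_app1 {a b c : α} (hab : a ≠ b) (hbc : b ≠ c) : c3 a b c a = b := by
  simp [c3, Equiv.swap_apply_of_ne_of_ne (Ne.symm hab) hbc]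

lemma c3_app2 (a b c : α) : c3 a b c b = c := by
  simp [c3]

lemma c3_app3 {a b c : α} (hac : a ≠ c) (hbc : b ≠ c) : c3 a b c c = a := by
  simp [c3, Equiv.swap_apply_of_ne_of_ne (Ne.symm hac) (Ne.symm hbc)]

lemma c3_appo {a b c x : α} (ha : x ≠ a) (hb : x ≠ b) (hc : x ≠ c) : c3 a b c x = x := by
  simp [c3, Equiv.swap_apply_of_ne_of_ne, ha, hb, hc]

lemma c3_isThreeCycle [Fintype α] {a b c : α} (hab : a ≠ b) (hac : a ≠ c) (hbc : b ≠ c) :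
    IsThreeCycle (c3 a b c) :=
  isThreeCycle_swap_mul_swap_same hac hab (Ne.symm hbc)

lemma c3_cube [Fintype α] {a b c : α} (hab : a ≠ b) (hac : a ≠ c) (hbc : b ≠ c) :
    (c3 a b c) ^ 3 = 1 := by
  have h := (c3_isThreeCycle hab hac hbc).orderOf
  rw [← h]; exact pow_orderOf_eq_one _

lemma c3_key2 {p p' q r : α} (h1 : p ≠ p') (h2 : p ≠ q) (h3 : p ≠ r) (h4 : p' ≠ q)
    (h5 : p' ≠ r) (h6 : q ≠ r) : (c3 p q r * c3 p' q r) ^ 2 = 1 := by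
  ext x
  simp only [pow_two, Equiv.Perm.mul_apply, Equiv.Perm.one_apply]
  rcases eq_or_ne x p with rfl | hp
  · rw [c3_appo h1 h2 h3, c3_app1 h2 h6, c3_app2, c3_app3 h3 h6]
  rcases eq_or_ne x p' with rfl | hp'
  · rw [c3_app1 h4 h6, c3_app2, c3_app3 h5 h6, c3_appo (Ne.symm h1) h4 h5]
  rcases eq_or_ne x q with rfl | hq
  · rw [c3_app2 p' x r, c3_app3 h3 h6, c3_appo h1 h2 h3, c3_app1 h2 h6]
  rcases eq_or_ne x r with rfl | hr
  · rw [c3_app3 h5 h6, c3_appo (Ne.symm h1) h4 h5, c3_app1 h4 h6, c3_app2 p q x]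
  · rw [c3_appo hp' hq hr, c3_appo hp hq hr, c3_appo hp' hq hr, c3_appo hp hq hr]

lemma c3_inv (a b c : α) : (c3 a b c)⁻¹ = c3 a c b := by
  simp [c3, mul_inv_rev]

lemma c3_conj (f : Equiv.Perm α) (a b c : α) :
    f * c3 a b c * f⁻¹ = c3 (f a) (f b) (f c) := by
  rw [c3, c3, Equiv.swap_apply_apply f a c, Equiv.swap_apply_apply f a b]
  group

lemma c3_rot {a b c : α} (hab : a ≠ b) (hac : a ≠ c) (hbc : b ≠ c) :
    c3 a b c = c3 b c a := by
  ext x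
  rcases eq_or_ne x a with rfl | ha
  · rw [c3_app1 hab hbc, c3_app3 (Ne.symm hab) (Ne.symm hac)]
  rcases eq_or_ne x b with rfl | hb
  · rw [c3_app2, c3_app1 hbc (Ne.symm hac)]
  rcases eq_or_ne x c with rfl | hc
  · rw [c3_app3 hac hbc, c3_app2]
  · rw [c3_appo ha hb hc, c3_appo hb hc ha]

lemma c3_id2 {a b q r : α} (hab : a ≠ b) (haq : a ≠ q) (har : a ≠ r) (hbq : b ≠ q)
    (hbr : b ≠ r) (hqr : q ≠ r) : c3 a q b = c3 a q r * c3 b r q := by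
  ext x
  simp only [Equiv.Perm.mul_apply]
  rcases eq_or_ne x a with rfl | ha
  · rw [c3_appo hab har haq, c3_app1 haq hqr, c3_app1 haq (Ne.symm hbq)]
  rcases eq_or_ne x q with rfl | hq
  · rw [c3_app2 a x b, c3_app3 hbq (Ne.symm hqr), c3_appo (Ne.symm hab) hbq hbr]
  rcases eq_or_ne x b with rfl | hb
  · rw [c3_app1 hbr (Ne.symm hqr), c3_app3 har hqr, c3_app3 hab (Ne.symm hbq)]
  rcases eq_or_ne x r with rfl | hr
  · rw [c3_app2 b x q, c3_app2 a q x, c3_appo (Ne.symm har) (Ne.symm hqr) (Ne.symm hbr)]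
  · rw [c3_appo hb hr hq, c3_appo ha hq hr, c3_appo ha hq hb]

lemma c3_id3 {a b q r : α} (hab : a ≠ b) (haq : a ≠ q) (har : a ≠ r) (hbq : b ≠ q)
    (hbr : b ≠ r) (hqr : q ≠ r) : c3 a r b = c3 a r q * c3 b q r := by
  ext x
  simp only [Equiv.Perm.mul_apply]
  rcases eq_or_ne x a with rfl | ha
  · rw [c3_appo hab haq har, c3_app1 har (Ne.symm hqr), c3_app1 har (Ne.symm hbr)]
  rcases eq_or_ne x r with rfl | hr
  · rw [c3_app2 a x b, c3_app3 hbr hqr, c3_appo (Ne.symm hab) hbr hbq]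
  rcases eq_or_ne x b with rfl | hb
  · rw [c3_app1 hbq hqr, c3_app3 haq (Ne.symm hqr), c3_app3 hab (Ne.symm hbr)]
  rcases eq_or_ne x q with rfl | hq
  · rw [c3_app2 b x r, c3_app2 a r x, c3_appo (Ne.symm haq) (Ne.symm hqr).symm (Ne.symm hbq)]
  · rw [c3_appo hb hq hr, c3_appo ha hr hq, c3_appo ha hr hb]

lemma c3_id4 {a b c q : α} (hab : a ≠ b) (hac : a ≠ c) (haq : a ≠ q) (hbc : b ≠ c)
    (hbq : b ≠ q) (hcq : c ≠ q) : c3 a b c = c3 a b q * c3 b c q := by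
  ext x
  simp only [Equiv.Perm.mul_apply]
  rcases eq_or_ne x a with rfl | ha
  · rw [c3_appo hab hac haq, c3_app1 hab hbq, c3_app1 hab hbc]
  rcases eq_or_ne x b with rfl | hb
  · rw [c3_app1 hbc hcq, c3_appo (Ne.symm hac) (Ne.symm hbc) hcq, c3_app2 a x c]
  rcases eq_or_ne x c with rfl | hc
  · rw [c3_app2 b x q, c3_app3 haq hbq, c3_app3 hac hbc]
  rcases eq_or_ne x q with rfl | hq
  · rw [c3_app3 hbq hcq, c3_app2 a b x,
      c3_appo (Ne.symm haq) (Ne.symm hbq) (Ne.symm hcq)]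
  · rw [c3_appo hb hc hq, c3_appo ha hb hq, c3_appo ha hb hc]

end c3

section gen
variable {α : Type*} [DecidableEq α] [Fintype α]

lemma IsThreeCycle.exists_c3 {σ : Equiv.Perm α} (h : IsThreeCycle σ) :
    ∃ x y z : α, x ≠ y ∧ x ≠ z ∧ y ≠ z ∧ σ = c3 x y z := by
  have hne : σ ≠ 1 := by
    intro h1
    have := h.card_support
    rw [h1] at this
    simp at this
  obtain ⟨x, hx⟩ : ∃ x, σ x ≠ x := by
    by_contra hc
    push_neg at hc
    exact hne (Equiv.Perm.ext fun y => hc y)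
  have hcube : σ ^ 3 = 1 := by
    rw [← h.orderOf]; exact pow_orderOf_eq_one _
  set y := σ x with hy
  set z := σ y with hz
  have hxy : x ≠ y := Ne.symm hx
  have hyz : y ≠ z := by
    intro he
    exact hx (σ.injective (by rw [← hz, ← he, ← hy]))
  have h3 : σ (σ (σ x)) = x := by
    have := congrArg (fun f : Equiv.Perm α => f x) hcube
    simpa [pow_succ, Equiv.Perm.mul_apply] using this
  have hzx : z ≠ x := by
    intro he
    have he' : σ (σ x) = x := by rw [← hy, ← hz]; exact he
    exact hx ((congrArg σ he').symm.trans h3)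
  refine ⟨x, y, z, hxy, Ne.symm hzx, hyz, ?_⟩
  have hσz : σ z = x := by rw [hz, hy]; exact h3
  have hsupp : σ.support = {x, y, z} := by
    refine (Finset.eq_of_subset_of_card_le ?_ ?_).symm
    · intro w hw
      simp only [Finset.mem_insert, Finset.mem_singleton] at hw
      rcases hw with rfl | rfl | rfl
      · exact Equiv.Perm.mem_support.2 hx
      · exact Equiv.Perm.mem_support.2 (by rw [← hz]; exact Ne.symm hyz)
      · exact Equiv.Perm.mem_support.2 (by rw [hσz]; exact Ne.symm hzx)
    · rw [h.card_support]
      rw [Finset.card_insert_of_notMem (by simp [hxy, Ne.symm hzx]),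
        Finset.card_insert_of_notMem (by simp [hyz]), Finset.card_singleton]
  ext w
  rcases eq_or_ne w x with rfl | hwx
  · rw [c3_app1 hxy hyz, ← hy]
  rcases eq_or_ne w y with rfl | hwy
  · rw [c3_app2, ← hz]
  rcases eq_or_ne w z with rfl | hwz
  · rw [c3_app3 (Ne.symm hzx) hyz, hσz]
  · rw [c3_appo hwx hwy hwz]
    have : w ∉ σ.support := by simp [hsupp, hwx, hwy, hwz]
    exact Equiv.Perm.notMem_support.1 this

/-- If a subgroup contains all the 3-cycles `c3 a q r` for `a ∉ {q, r}`, then it contains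
the alternating group. -/
lemma alternating_le_of_c3 {q r : α} (hqr : q ≠ r) (H : Subgroup (Equiv.Perm α))
    (hH : ∀ a, a ≠ q → a ≠ r → c3 a q r ∈ H) : alternatingGroup α ≤ H := by
  rw [← Equiv.Perm.closure_three_cycles_eq_alternating]
  rw [Subgroup.closure_le]
  intro σ hσ
  obtain ⟨x, y, z, hxy, hxz, hyz, rfl⟩ := IsThreeCycle.exists_c3 hσ
  -- helper facts
  have hInv : ∀ a, a ≠ q → a ≠ r → c3 a r q ∈ H := fun a h1 h2 => by
    rw [← c3_inv]; exact inv_mem (hH a h1 h2)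
  have hQ : ∀ a b, a ≠ q → a ≠ r → b ≠ q → b ≠ r → a ≠ b → c3 a q b ∈ H :=
    fun a b h1 h2 h3 h4 h5 => by
      rw [c3_id2 h5 h1 h2 h3 h4 hqr]
      exact mul_mem (hH a h1 h2) (hInv b h3 h4)
  have hQ' : ∀ a b, a ≠ q → a ≠ r → b ≠ q → b ≠ r → a ≠ b → c3 a b q ∈ H :=
    fun a b h1 h2 h3 h4 h5 => by
      have : c3 a b q = (c3 a q b)⁻¹ := by
        rw [c3_inv]
      rw [this]
      exact inv_mem (hQ a b h1 h2 h3 h4 h5)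
  have hR : ∀ a b, a ≠ q → a ≠ r → b ≠ q → b ≠ r → a ≠ b → c3 a r b ∈ H :=
    fun a b h1 h2 h3 h4 h5 => by
      rw [c3_id3 h5 h1 h2 h3 h4 hqr]
      exact mul_mem (hInv a h1 h2) (hH b h3 h4)
  have hR' : ∀ a b, a ≠ q → a ≠ r → b ≠ q → b ≠ r → a ≠ b → c3 a b r ∈ H :=
    fun a b h1 h2 h3 h4 h5 => by
      have : c3 a b r = (c3 a r b)⁻¹ := by rw [c3_inv]
      rw [this]
      exact inv_mem (hR a b h1 h2 h3 h4 h5)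
  have hN : ∀ a b c, a ≠ q → a ≠ r → b ≠ q → b ≠ r → c ≠ q → c ≠ r →
      a ≠ b → a ≠ c → b ≠ c → c3 a b c ∈ H :=
    fun a b c h1 h2 h3 h4 h5 h6 h7 h8 h9 => by
      rw [c3_id4 h7 h8 h1 h9 h3 h5]
      exact mul_mem (hQ' a b h1 h2 h3 h4 h7) (hQ' b c h3 h4 h5 h6 h9)
  -- case analysis
  rcases eq_or_ne x q with rfl | hxq
  · -- x = q
    rcases eq_or_ne y r with rfl | hyr
    · -- σ = c3 q r z = c3 z q r
      have hzq : z ≠ x := Ne.symm hxz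
      have hzr : z ≠ y := Ne.symm hyz
      rw [c3_rot hxy hxz hyz, c3_rot hyz (Ne.symm hxy) hzq]
      exact hH z hzq hzr
    rcases eq_or_ne z r with rfl | hzr
    · -- σ = c3 q y r = c3 y r q
      rw [c3_rot hxy hxz hyz]
      exact hInv y (Ne.symm hxy) hyr
    · -- σ = c3 q y z = c3 z q y
      rw [c3_rot hxy hxz hyz, c3_rot hyz (Ne.symm hxy) (Ne.symm hxz)]
      exact hQ z y (Ne.symm hxz) hzr (Ne.symm hxy) hyr (Ne.symm hyz)
  rcases eq_or_ne y q with rfl | hyq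
  · -- y = q
    rcases eq_or_ne x r with rfl | hxr
    · -- σ = c3 r q z = c3 z r q
      rw [c3_rot hxy hxz hyz, c3_rot hyz (Ne.symm hxy) (Ne.symm hxz)]
      exact hInv z (Ne.symm hyz) (Ne.symm hxz)
    rcases eq_or_ne z r with rfl | hzr
    · -- σ = c3 x q r
      exact hH x hxy hxz
    · -- σ = c3 x q z
      exact hQ x z hxy hxr (Ne.symm hyz) hzr hxz
  rcases eq_or_ne z q with rfl | hzq
  · -- z = q
    rcases eq_or_ne x r with rfl | hxr
    · -- σ = c3 r y q = c3 y q r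
      rw [c3_rot hxy hxz hyz]
      exact hH y hyz (Ne.symm hxy)
    rcases eq_or_ne y r with rfl | hyr
    · -- σ = c3 x r q
      exact hInv x hxz hxy
    · -- σ = c3 x y q = c3 y q x
      exact hQ' x y hxz hxr hyz hyr hxy
  · -- q not among x, y, z
    rcases eq_or_ne x r with rfl | hxr
    · -- σ = c3 r y z = c3 z r y
      rw [c3_rot hxy hxz hyz, c3_rot hyz (Ne.symm hxy) (Ne.symm hxz)]
      exact hR z y hzq (Ne.symm hxz) hyq (Ne.symm hxy) (Ne.symm hyz)
    rcases eq_or_ne y r with rfl | hyr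
    · -- σ = c3 x r z
      exact hR x z hxq hxy hzq (Ne.symm hyz) hxz
    rcases eq_or_ne z r with rfl | hzr
    · -- σ = c3 x y r
      exact hR' x y hxq hxz hyq hyz hxy
    · -- none
      exact hN x y z hxq hxr hyq hyr hzq hzr hxy hxz hyz

end gen

section descProd

lemma descProd_empty {G : Type*} [Monoid G] (x : ℕ → G) (m : ℕ) :
    descProd x m (m + 1) = 1 := by
  rw [descProd, Nat.sub_self]
  simp

lemma descProd_step {G : Type*} [Monoid G] (x : ℕ → G) {m k : ℕ} (h : k ≤ m) :
    descProd x m k = descProd x m (k + 1) * x k := by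
  have e : m + 1 - k = (m + 1 - (k + 1)) + 1 := by omega
  rw [descProd, descProd, e, List.range'_succ]
  simp

end descProd

section main

lemma threeCycle_eq_c3 (n k : ℕ) (h1 : 1 ≤ k) (h2 : k + 1 < n) :
    threeCycle n k = c3 ⟨k - 1, by omega⟩ ⟨k, by omega⟩ ⟨k + 1, h2⟩ := by
  rw [threeCycle, dif_pos ⟨h1, h2⟩]
  rfl

lemma fin_ne {n a b : ℕ} (ha : a < n) (hb : b < n) (h : a ≠ b) :
    (⟨a, ha⟩ : Fin n) ≠ ⟨b, hb⟩ := by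
  simp [Fin.ext_iff]; omega

lemma descProd_spec (n : ℕ) (hn : 5 ≤ n) : ∀ d k (hk2 : 2 ≤ k) (hkd : k + d = n - 1),
    (∀ (j : ℕ) (hj : j + 2 ≤ k),
      descProd (threeCycle n) (n - 2) k ⟨j, by omega⟩ = ⟨j, by omega⟩) ∧
    descProd (threeCycle n) (n - 2) k ⟨k - 1, by omega⟩ = ⟨n - 2, by omega⟩ ∧
    descProd (threeCycle n) (n - 2) k ⟨k, by omega⟩ = ⟨n - 1, by omega⟩ := by
  intro d
  induction d with
  | zero =>
    intro k hk2 hkd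
    have hk : k = n - 1 := by omega
    subst hk
    have e : descProd (threeCycle n) (n - 2) (n - 1) = 1 := by
      have : n - 1 = (n - 2) + 1 := by omega
      rw [this]; exact descProd_empty _ _
    rw [e]
    refine ⟨fun j hj => rfl, ?_, ?_⟩ <;> simp [Fin.ext_iff] <;> omega
  | succ d ih =>
    intro k hk2 hkd
    have hkm : k ≤ n - 2 := by omega
    have step : descProd (threeCycle n) (n - 2) k
        = descProd (threeCycle n) (n - 2) (k + 1) * threeCycle n k := descProd_step _ hkm
    obtain ⟨ih1, ih2, ih3⟩ := ih (k + 1) (by omega) (by omega)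
    have hc : threeCycle n k = c3 ⟨k - 1, by omega⟩ ⟨k, by omega⟩ ⟨k + 1, by omega⟩ :=
      threeCycle_eq_c3 n k (by omega) (by omega)
    refine ⟨fun j hj => ?_, ?_, ?_⟩
    · rw [step, Equiv.Perm.mul_apply, hc,
        c3_appo (fin_ne _ _ (by omega)) (fin_ne _ _ (by omega)) (fin_ne _ _ (by omega))]
      exact ih1 j (by omega)
    · rw [step, Equiv.Perm.mul_apply, hc,
        c3_app1 (fin_ne _ _ (by omega)) (fin_ne _ _ (by omega))]
      exact ih2
    · rw [step, Equiv.Perm.mul_apply, hc, c3_app2]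
      exact ih3

lemma vElem_eq (n i : ℕ) (hn : 5 ≤ n) (h1 : 1 ≤ i) (h2 : i ≤ n - 2) :
    vElem n i = c3 ⟨i - 1, by omega⟩ ⟨n - 2, by omega⟩ ⟨n - 1, by omega⟩ := by
  obtain ⟨hfix, hk1, hk⟩ := descProd_spec n hn (n - 1 - (i + 1)) (i + 1) (by omega) (by omega)
  rw [vElem, threeCycle_eq_c3 n i h1 (by omega), c3_conj]
  have e1 : descProd (threeCycle n) (n - 2) (i + 1) ⟨i - 1, by omega⟩ = ⟨i - 1, by omega⟩ :=
    hfix (i - 1) (by omega)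
  have e2 : descProd (threeCycle n) (n - 2) (i + 1) ⟨i, by omega⟩ = ⟨n - 2, by omega⟩ := hk1
  simp only [e1, e2, hk]

end main

theorem vElem_satisfy_carmichael_relations_and_generate (n : ℕ) (hn : 5 ≤ n) :
    (∀ i, 1 ≤ i → i ≤ n - 2 → (vElem n i) ^ 3 = 1) ∧
    (∀ i j, 1 ≤ i → i ≤ n - 2 → 1 ≤ j → j ≤ n - 2 → i ≠ j →
      (vElem n i * vElem n j) ^ 2 = 1) ∧
    Subgroup.closure {g : Equiv.Perm (Fin n) | ∃ i, 1 ≤ i ∧ i ≤ n - 2 ∧ g = vElem n i} =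
      alternatingGroup (Fin n) := by
  refine ⟨?_, ?_, ?_⟩
  · intro i h1 h2
    rw [vElem_eq n i hn h1 h2]
    exact c3_cube (fin_ne _ _ (by omega)) (fin_ne _ _ (by omega)) (fin_ne _ _ (by omega))
  · intro i j h1 h2 h3 h4 hij
    rw [vElem_eq n i hn h1 h2, vElem_eq n j hn h3 h4]
    exact c3_key2 (fin_ne _ _ (by omega)) (fin_ne _ _ (by omega)) (fin_ne _ _ (by omega))
      (fin_ne _ _ (by omega)) (fin_ne _ _ (by omega)) (fin_ne _ _ (by omega))
  · apply le_antisymm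
    · rw [Subgroup.closure_le]
      rintro g ⟨i, h1, h2, rfl⟩
      rw [SetLike.mem_coe, vElem_eq n i hn h1 h2]
      exact (c3_isThreeCycle (fin_ne _ _ (by omega)) (fin_ne _ _ (by omega))
        (fin_ne _ _ (by omega))).mem_alternatingGroup
    · apply alternating_le_of_c3 (q := ⟨n - 2, by omega⟩) (r := ⟨n - 1, by omega⟩)
        (fin_ne _ _ (by omega))
      intro a haq har
      have hav : a.val ≤ n - 3 := by
        have h1 := a.isLt
        have h2 : a.val ≠ n - 2 := fun h => haq (Fin.ext h)
        have h3 : a.val ≠ n - 1 := fun h => har (Fin.ext h)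
        omega
      apply Subgroup.subset_closure
      refine ⟨a.val + 1, by omega, by omega, ?_⟩
      rw [vElem_eq n (a.val + 1) hn (by omega) (by omega)]
      congr 1
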